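/- (Superposition principle, increasing case.) Let N ≥ 2 be an integer, p ≥ 2 a real number, 0 < r₀ < R₀ ≤ ∞, and let V be a continuous function on (r₀, R₀) with V ≥ 0. Let u, v be C² functions on (r₀, R₀) such that 0 < v(r) ≤ u(r) and u'(r) ≥ v'(r) > 0 for all r ∈ (r₀, R₀). If u is a radial subsolution and v is a radial supersolution of −Δ_p u − V|u|^{p−2}u = 0, then u − v is a radial subsolution of the same equation, i.e. −|u'(r) − v'(r)|^{p−2}·L(u−v)(r) − V(r)·(u(r) − v(r))^{p−1} ≤ 0 for all r ∈ (r₀, R₀). -/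

import Mathlib

/-- The ordinary differential operator `L u (r) = (p-1) u''(r) + ((N-1)/r) u'(r)`,
so that for a radial function the p-Laplacian is `Δ_p u = |u'(r)|^{p-2} L u (r)`. -/
noncomputable def Lrad (N : ℕ) (p : ℝ) (u : ℝ → ℝ) (r : ℝ) : ℝ :=
  (p - 1) * deriv (deriv u) r + (((N : ℝ) - 1) / r) * deriv u r

open Set Real Filter
lemma key_ineq (q b c vv w : ℝ) (hq : 0 ≤ q) (hb : 0 < b) (hc : 0 < c)
    (hv : 0 ≤ vv) (hw : 0 ≤ w) :
    (vv + w) ^ (q + 1) / (b + c) ^ q ≤ vv ^ (q + 1) / b ^ q + w ^ (q + 1) / c ^ q := by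
  have ha : 0 < b + c := by linarith
  have h := (convexOn_rpow (p := q + 1) (by linarith)).2
    (mem_Ici.2 (div_nonneg hv hb.le)) (mem_Ici.2 (div_nonneg hw hc.le))
    (div_nonneg hb.le ha.le) (div_nonneg hc.le ha.le)
    (by field_simp)
  simp only [smul_eq_mul] at h
  have e1 : b / (b + c) * (vv / b) + c / (b + c) * (w / c)  = (vv + w) / (b + c) := by
    field_simp
  rw [e1, div_rpow (by linarith) ha.le, div_rpow hv hb.le, div_rpow hw hc.le] at h
  have hbq : (0:ℝ) < b ^ q := rpow_pos_of_pos hb _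
  have hcq : (0:ℝ) < c ^ q := rpow_pos_of_pos hc _
  have haq : (0:ℝ) < (b + c) ^ q := rpow_pos_of_pos ha _
  have eb : b ^ (q + 1) = b ^ q * b := by rw [rpow_add hb, rpow_one]
  have ec : c ^ (q + 1) = c ^ q * c := by rw [rpow_add hc, rpow_one]
  have ea : (b + c) ^ (q + 1) = (b + c) ^ q * (b + c) := by rw [rpow_add ha, rpow_one]
  rw [eb, ec, ea] at h
  calc (vv + w) ^ (q + 1) / (b + c) ^ q
      = (b + c) * ((vv + w) ^ (q + 1) / ((b + c) ^ q * (b + c))) := by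
        field_simp
    _ ≤ (b + c) * (b / (b + c) * (vv ^ (q + 1) / (b ^ q * b)) +
          c / (b + c) * (w ^ (q + 1) / (c ^ q * c))) :=
        mul_le_mul_of_nonneg_left h ha.le
    _ = vv ^ (q + 1) / b ^ q + w ^ (q + 1) / c ^ q := by
        field_simp

/-- Superposition principle, increasing case: if `u` is a radial subsolution and `v`
a radial supersolution of `-Δ_p u - V |u|^{p-2} u = 0` on `(r₀, R₀)`, with
`0 < v ≤ u` and `u' ≥ v' > 0`, `V ≥ 0`, `p ≥ 2`, then `u - v` is a radial subsolution. -/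
theorem superposition_increasing (N : ℕ) (hN : 2 ≤ N) (p : ℝ) (hp : 2 ≤ p)
    (r₀ : ℝ) (R₀ : EReal) (hr₀ : 0 < r₀) (hR : (r₀ : EReal) < R₀)
    (V u v : ℝ → ℝ)
    (hVcont : ContinuousOn V {r : ℝ | r₀ < r ∧ (r : EReal) < R₀})
    (hV : ∀ r : ℝ, r₀ < r → (r : EReal) < R₀ → 0 ≤ V r)
    (hu : ContDiffOn ℝ 2 u {r : ℝ | r₀ < r ∧ (r : EReal) < R₀})
    (hv : ContDiffOn ℝ 2 v {r : ℝ | r₀ < r ∧ (r : EReal) < R₀})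
    (hvu : ∀ r : ℝ, r₀ < r → (r : EReal) < R₀ → 0 < v r ∧ v r ≤ u r)
    (hder : ∀ r : ℝ, r₀ < r → (r : EReal) < R₀ → deriv v r ≤ deriv u r ∧ 0 < deriv v r)
    (hsub : ∀ r : ℝ, r₀ < r → (r : EReal) < R₀ →
      -(|deriv u r| ^ (p - 2) * Lrad N p u r) - V r * (|u r| ^ (p - 2) * u r) ≤ 0)
    (hsup : ∀ r : ℝ, r₀ < r → (r : EReal) < R₀ →
      0 ≤ -(|deriv v r| ^ (p - 2) * Lrad N p v r) - V r * (|v r| ^ (p - 2) * v r)) :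
    ∀ r : ℝ, r₀ < r → (r : EReal) < R₀ →
      -(|deriv u r - deriv v r| ^ (p - 2) * Lrad N p (fun s => u s - v s) r)
        - V r * (u r - v r) ^ (p - 1) ≤ 0 := by
  set S : Set ℝ := {r : ℝ | r₀ < r ∧ (r : EReal) < R₀} with hSdef
  have hS : IsOpen S := by
    have h1 : IsOpen {r : ℝ | r₀ < r} := isOpen_lt continuous_const continuous_id
    have h2 : IsOpen {r : ℝ | (r : EReal) < R₀} :=
      isOpen_Iio.preimage continuous_coe_real_ereal
    exact h1.inter h2
  have hdu : ∀ s ∈ S, DifferentiableAt ℝ u s := fun s hs =>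
    (hu.contDiffAt (hS.mem_nhds hs)).differentiableAt (by norm_num)
  have hdv : ∀ s ∈ S, DifferentiableAt ℝ v s := fun s hs =>
    (hv.contDiffAt (hS.mem_nhds hs)).differentiableAt (by norm_num)
  have hu' : ContDiffOn ℝ 1 (deriv u) S := hu.deriv_of_isOpen hS (by norm_num)
  have hv' : ContDiffOn ℝ 1 (deriv v) S := hv.deriv_of_isOpen hS (by norm_num)
  intro r hr1 hr2
  have hrS : r ∈ S := ⟨hr1, hr2⟩
  have hmem : S ∈ nhds r := hS.mem_nhds hrS
  -- first derivative of u - v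
  have hd1 : deriv (fun s => u s - v s) r = deriv u r - deriv v r :=
    deriv_sub (hdu r hrS) (hdv r hrS)
  -- second derivative
  have hev : deriv (fun s => u s - v s) =ᶠ[nhds r] fun s => deriv u s - deriv v s :=
    eventually_of_mem hmem (fun s hs => deriv_sub (hdu s hs) (hdv s hs))
  have hd2 : deriv (deriv (fun s => u s - v s)) r
      = deriv (deriv u) r - deriv (deriv v) r := by
    rw [hev.deriv_eq]
    exact deriv_sub
      ((hu'.contDiffAt hmem).differentiableAt one_ne_zero)
      ((hv'.contDiffAt hmem).differentiableAt one_ne_zero)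
  have hLw : Lrad N p (fun s => u s - v s) r = Lrad N p u r - Lrad N p v r := by
    unfold Lrad; rw [hd1, hd2]; ring
  -- notation
  obtain ⟨hba, hb⟩ := hder r hr1 hr2
  obtain ⟨hVv, hvU⟩ := hvu r hr1 hr2
  have ha : 0 < deriv u r := lt_of_lt_of_le hb hba
  have hU : 0 < u r := lt_of_lt_of_le hVv hvU
  have hVr : 0 ≤ V r := hV r hr1 hr2
  set a := deriv u r
  set b := deriv v r
  set U := u r
  set Vv := v r
  set Lu := Lrad N p u r
  set Lv := Lrad N p v r
  have e21 : p - 2 + 1 = p - 1 := by ring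
  have eU : U ^ (p - 2) * U = U ^ (p - 1) := by
    rw [← e21, rpow_add_one hU.ne']
  have eVv : Vv ^ (p - 2) * Vv = Vv ^ (p - 1) := by
    rw [← e21, rpow_add_one hVv.ne']
  have hsub' : -(V r * U ^ (p - 1)) ≤ a ^ (p - 2) * Lu := by
    have := hsub r hr1 hr2
    rw [abs_of_pos ha, abs_of_pos hU] at this
    nlinarith [this, eU]
  have hsup' : b ^ (p - 2) * Lv ≤ -(V r * Vv ^ (p - 1)) := by
    have := hsup r hr1 hr2
    rw [abs_of_pos hb, abs_of_pos hVv] at this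
    nlinarith [this, eVv]
  rw [hLw]
  set c := a - b with hc
  set W := U - Vv with hW
  have hc0 : 0 ≤ c := by simp [hc]; linarith
  have hW0 : 0 ≤ W := by simp [hW]; linarith
  rw [abs_of_nonneg hc0]
  rcases eq_or_lt_of_le hc0 with hceq | hcpos
  · -- c = 0
    rcases eq_or_lt_of_le hp with hpeq | hpgt
    · -- p = 2
      rw [← hpeq]
      norm_num
      have h1 : a ^ (p - 2) = 1 := by rw [← hpeq]; norm_num
      have h2 : b ^ (p - 2) = 1 := by rw [← hpeq]; norm_num
      have h3 : U ^ (p - 1) = U := by rw [← hpeq]; norm_num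
      have h4 : Vv ^ (p - 1) = Vv := by rw [← hpeq]; norm_num
      rw [h1, h3] at hsub'
      rw [h2, h4] at hsup'
      nlinarith [mul_le_mul_of_nonneg_left hvU hVr]
    · -- p > 2
      rw [← hceq, zero_rpow (by linarith : p - 2 ≠ 0)]
      have : 0 ≤ V r * W ^ (p - 1) := mul_nonneg hVr (rpow_nonneg hW0 _)
      linarith
  · -- c > 0
    have haq : (0:ℝ) < a ^ (p - 2) := rpow_pos_of_pos ha _
    have hbq : (0:ℝ) < b ^ (p - 2) := rpow_pos_of_pos hb _
    have hcq : (0:ℝ) < c ^ (p - 2) := rpow_pos_of_pos hcpos _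
    have hkey := key_ineq (p - 2) b c Vv W (by linarith) hb hcpos hVv.le hW0
    rw [e21] at hkey
    have eb : Vv + W = U := by simp [hW]
    have ea : b + c = a := by simp [hc]
    rw [eb, ea] at hkey
    rw [div_add_div _ _ hbq.ne' hcq.ne', div_le_div_iff₀ haq (mul_pos hbq hcq)] at hkey
    -- hkey : U^(p-1) * (b^(p-2) * c^(p-2)) ≤ (Vv^(p-1)*c^(p-2) + W^(p-1)*b^(p-2)) * a^(p-2)
    have hmain : 0 ≤ a ^ (p - 2) * b ^ (p - 2) *
        (c ^ (p - 2) * (Lu - Lv) + V r * W ^ (p - 1)) := by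
      nlinarith [mul_le_mul_of_nonneg_left hkey hVr,
        mul_le_mul_of_nonneg_left hsub' (mul_pos hbq hcq).le,
        mul_le_mul_of_nonneg_left hsup' (mul_pos haq hcq).le]
    have := (mul_nonneg_iff_of_pos_left (mul_pos haq hbq)).mp hmain
    linarith
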